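/- If t → t' is a single reduction step in λ_LAL, then t^- →*_β t'^-, i.e., the erasure of t reduces to the erasure of t' by zero or more β-reduction steps of the pure lambda-calculus. -/

import Mathlib

set_option maxHeartbeats 1000000

/-! ## Terms of the light affine lambda-calculus λ_LAL (de Bruijn indices) -/

inductive Tm : Type where
  | var : ℕ → Tm
  | lam : Tm → Tm
  | app : Tm → Tm → Tm
  | bang : Tm → Tm
  /-- `letBang u t` is `let u be !x in t`; `t` binds de Bruijn index 0. -/
  | letBang : Tm → Tm → Tm
  | para : Tm → Tm
  /-- `letPara u t` is `let u be §x in t`; `t` binds de Bruijn index 0. -/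
  | letPara : Tm → Tm → Tm

namespace LAL

def upRen (f : ℕ → ℕ) : ℕ → ℕ
  | 0 => 0
  | n + 1 => f n + 1

def rename (f : ℕ → ℕ) : Tm → Tm
  | .var n => .var (f n)
  | .lam t => .lam (rename (upRen f) t)
  | .app t u => .app (rename f t) (rename f u)
  | .bang t => .bang (rename f t)
  | .letBang u t => .letBang (rename f u) (rename (upRen f) t)
  | .para t => .para (rename f t)
  | .letPara u t => .letPara (rename f u) (rename (upRen f) t)

/-- Capture-avoiding substitution `t[u / var k]` (indices above `k` are shifted
down). -/
def sub : Tm → ℕ → Tm → Tm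
  | .var n, k, u => if n = k then rename (· + k) u else if k < n then .var (n - 1) else .var n
  | .lam t, k, u => .lam (sub t (k + 1) u)
  | .app t v, k, u => .app (sub t k u) (sub v k u)
  | .bang t, k, u => .bang (sub t k u)
  | .letBang v t, k, u => .letBang (sub v k u) (sub t (k + 1) u)
  | .para t, k, u => .para (sub t k u)
  | .letPara v t, k, u => .letPara (sub v k u) (sub t (k + 1) u)

/-! ## Reduction -/

inductive Rule : Type where
  | beta | bang | para | com1 | com2

/-- One-step reduction of λ_LAL: contextual closure of the rules
(β), (!), (§), (com1), (com2). -/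
inductive Step : Rule → Tm → Tm → Prop where
  | beta {t u} : Step .beta (.app (.lam t) u) (sub t 0 u)
  | bang {t u} : Step .bang (.letBang (.bang u) t) (sub t 0 u)
  | para {t u} : Step .para (.letPara (.para u) t) (sub t 0 u)
  | com1BB {u₁ t₁ t₂} : Step .com1 (.letBang (.letBang u₁ t₁) t₂)
      (.letBang u₁ (.letBang t₁ (rename (upRen (· + 1)) t₂)))
  | com1BP {u₁ t₁ t₂} : Step .com1 (.letPara (.letBang u₁ t₁) t₂)
      (.letBang u₁ (.letPara t₁ (rename (upRen (· + 1)) t₂)))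
  | com1PB {u₁ t₁ t₂} : Step .com1 (.letBang (.letPara u₁ t₁) t₂)
      (.letPara u₁ (.letBang t₁ (rename (upRen (· + 1)) t₂)))
  | com1PP {u₁ t₁ t₂} : Step .com1 (.letPara (.letPara u₁ t₁) t₂)
      (.letPara u₁ (.letPara t₁ (rename (upRen (· + 1)) t₂)))
  | com2B {u₁ t₁ t₂} : Step .com2 (.app (.letBang u₁ t₁) t₂)
      (.letBang u₁ (.app t₁ (rename (· + 1) t₂)))
  | com2P {u₁ t₁ t₂} : Step .com2 (.app (.letPara u₁ t₁) t₂)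
      (.letPara u₁ (.app t₁ (rename (· + 1) t₂)))
  | congLam {r t t'} : Step r t t' → Step r (.lam t) (.lam t')
  | congApp₁ {r t t' u} : Step r t t' → Step r (.app t u) (.app t' u)
  | congApp₂ {r t u u'} : Step r u u' → Step r (.app t u) (.app t u')
  | congBang {r t t'} : Step r t t' → Step r (.bang t) (.bang t')
  | congPara {r t t'} : Step r t t' → Step r (.para t) (.para t')
  | congLetBang₁ {r u u' t} : Step r u u' → Step r (.letBang u t) (.letBang u' t)
  | congLetBang₂ {r u t t'} : Step r t t' → Step r (.letBang u t) (.letBang u t')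
  | congLetPara₁ {r u u' t} : Step r u u' → Step r (.letPara u t) (.letPara u' t)
  | congLetPara₂ {r u t t'} : Step r t t' → Step r (.letPara u t) (.letPara u t')

/-- Many-step reduction. -/
def Red : Tm → Tm → Prop := Relation.ReflTransGen (fun a b => ∃ r, Step r a b)

/-! ## Types of intuitionistic Light Affine Logic -/

inductive Ty : Type where
  | tvar : ℕ → Ty
  | lolli : Ty → Ty → Ty
  | bang : Ty → Ty
  | para : Ty → Ty
  | all : Ty → Ty

def liftTy (c : ℕ) : Ty → Ty
  | .tvar n => if n < c then .tvar n else .tvar (n + 1)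
  | .lolli A B => .lolli (liftTy c A) (liftTy c B)
  | .bang A => .bang (liftTy c A)
  | .para A => .para (liftTy c A)
  | .all A => .all (liftTy (c + 1) A)

def substTy : Ty → ℕ → Ty → Ty
  | .tvar n, k, B => if n = k then (liftTy 0)^[k] B else if k < n then .tvar (n - 1) else .tvar n
  | .lolli A C, k, B => .lolli (substTy A k B) (substTy C k B)
  | .bang A, k, B => .bang (substTy A k B)
  | .para A, k, B => .para (substTy A k B)
  | .all A, k, B => .all (substTy A (k + 1) B)

/-! ## Syntactic sugar: tensor -/

/-- `A ⊗ B = ∀α.((A ⊸ B ⊸ α) ⊸ α)`. -/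
def tensorTy (A B : Ty) : Ty :=
  .all (.lolli (.lolli (liftTy 0 A) (.lolli (liftTy 0 B) (.tvar 0))) (.tvar 0))

/-- `t ⊗ u = λy.((y)t)u`. -/
def tensorTm (t u : Tm) : Tm :=
  .lam (.app (.app (.var 0) (rename (· + 1) t)) (rename (· + 1) u))

/-- `let u be x⊗y in t = (u)λx.λy.t`; in `t`, index 1 is the first component
and index 0 the second. -/
def letTen (u t : Tm) : Tm := .app u (.lam (.lam t))

/-! ## Typing (natural-deduction presentation of LAL, with discharged marks) -/

inductive Mark : Type where
  | pl  -- plain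
  | db  -- !-discharged
  | dp  -- §-discharged
  deriving DecidableEq

/-- Transposition of de Bruijn indices `i` and `i+1`. -/
def swapF (i : ℕ) : ℕ → ℕ := fun n => if n = i then i + 1 else if n = i + 1 then i else n

inductive Tj : List (Mark × Ty) → Tm → Ty → Prop where
  | ax (A : Ty) : Tj [(.pl, A)] (.var 0) A
  | weak {Γ t A} (e : Mark × Ty) : Tj Γ t A → Tj (e :: Γ) (rename (· + 1) t) A
  | exch {Γ Δ : List (Mark × Ty)} {a b t A} :
      Tj (Γ ++ a :: b :: Δ) t A → Tj (Γ ++ b :: a :: Δ) (rename (swapF Γ.length) t) A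
  | cntr {Γ t A B} : Tj ((.db, B) :: (.db, B) :: Γ) t A →
      Tj ((.db, B) :: Γ) (rename Nat.pred t) A
  | cut {Γ Δ : List (Mark × Ty)} {u t A C} : Tj Δ u A → Tj ((.pl, A) :: Γ) t C →
      Tj (Γ ++ Δ) (sub t 0 (rename (· + Γ.length) u)) C
  | lam {Γ t A B} : Tj ((.pl, A) :: Γ) t B → Tj Γ (.lam t) (.lolli A B)
  | app {Γ Δ : List (Mark × Ty)} {t u A B} : Tj Γ t (.lolli A B) → Tj Δ u A →
      Tj (Γ ++ Δ) (.app t (rename (· + Γ.length) u)) B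
  | allI {Γ : List (Mark × Ty)} {t A} :
      Tj (Γ.map (fun e => (e.1, liftTy 0 e.2))) t A → Tj Γ t (.all A)
  | allE {Γ t A} (B : Ty) : Tj Γ t (.all A) → Tj Γ t (substTy A 0 B)
  | bangI₀ {t A} : Tj [] t A → Tj [] (.bang t) (.bang A)
  | bangI₁ {t A B} : Tj [(.pl, B)] t A → Tj [(.db, B)] (.bang t) (.bang A)
  | bangE {Γ Δ : List (Mark × Ty)} {u t A C} : Tj Δ u (.bang A) →
      Tj ((.db, A) :: Γ) t C →
      Tj (Γ ++ Δ) (.letBang (rename (· + Γ.length) u) t) C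
  | paraI {Γ Γ' : List (Mark × Ty)} {t A} : Tj Γ t A →
      (∀ e ∈ Γ, e.1 = Mark.pl) →
      List.Forall₂ (fun (e e' : Mark × Ty) => e'.2 = e.2 ∧ e'.1 ≠ Mark.pl) Γ Γ' →
      Tj Γ' (.para t) (.para A)
  | paraE {Γ Δ : List (Mark × Ty)} {u t A C} : Tj Δ u (.para A) →
      Tj ((.dp, A) :: Γ) t C →
      Tj (Γ ++ Δ) (.letPara (rename (· + Γ.length) u) t) C

/-! ## Church encodings -/

/-- Tally integers : `N = ∀α. !(α ⊸ α) ⊸ §(α ⊸ α)`. -/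
def natTy : Ty := .all (.lolli (.bang (.lolli (.tvar 0) (.tvar 0)))
  (.para (.lolli (.tvar 0) (.tvar 0))))

/-- Church numeral `n̲` of type `N`. -/
def churchNat (n : ℕ) : Tm :=
  .lam (.letBang (.var 0) (.para (.lam ((fun b => Tm.app (.var 1) b)^[n] (.var 0)))))

/-- Lists of elements of type `A` : `L_A = ∀α. !(A ⊸ α ⊸ α) ⊸ §(α ⊸ α)`. -/
def listTy (A : Ty) : Ty := .all (.lolli (.bang (.lolli (liftTy 0 A)
  (.lolli (.tvar 0) (.tvar 0)))) (.para (.lolli (.tvar 0) (.tvar 0))))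

/-- Church encoding of the list whose elements are the terms `as`. -/
def encListTm (as : List Tm) : Tm :=
  .lam (.letBang (.var 0) (.para (.lam
    (as.foldr (fun a acc => Tm.app (.app (.var 1) (rename (· + 3) a)) acc) (.var 0)))))

/-! ## Pure lambda-terms, β-reduction, and system F -/

inductive PTm : Type where
  | var : ℕ → PTm
  | lam : PTm → PTm
  | app : PTm → PTm → PTm

def prename (f : ℕ → ℕ) : PTm → PTm
  | .var n => .var (f n)
  | .lam t => .lam (prename (upRen f) t)
  | .app t u => .app (prename f t) (prename f u)

def psub : PTm → ℕ → PTm → PTm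
  | .var n, k, u => if n = k then prename (· + k) u else if k < n then .var (n - 1) else .var n
  | .lam t, k, u => .lam (psub t (k + 1) u)
  | .app t v, k, u => .app (psub t k u) (psub v k u)

/-- β-reduction of the pure lambda-calculus (one step, contextual). -/
inductive PStep : PTm → PTm → Prop where
  | beta {t u} : PStep (.app (.lam t) u) (psub t 0 u)
  | congLam {t t'} : PStep t t' → PStep (.lam t) (.lam t')
  | congApp₁ {t t' u} : PStep t t' → PStep (.app t u) (.app t' u)
  | congApp₂ {t u u'} : PStep u u' → PStep (.app t u) (.app t u')

/-- Zero or more β-reduction steps. -/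
def PRed : PTm → PTm → Prop := Relation.ReflTransGen PStep

/-- Erasure of λ_LAL terms to pure lambda-terms. -/
def eraseTm : Tm → PTm
  | .var n => .var n
  | .lam t => .lam (eraseTm t)
  | .app t u => .app (eraseTm t) (eraseTm u)
  | .bang t => eraseTm t
  | .para t => eraseTm t
  | .letBang u t => psub (eraseTm t) 0 (eraseTm u)
  | .letPara u t => psub (eraseTm t) 0 (eraseTm u)

/-- Types of system F. -/
inductive FTy : Type where
  | tvar : ℕ → FTy
  | arr : FTy → FTy → FTy
  | all : FTy → FTy

def liftF (c : ℕ) : FTy → FTy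
  | .tvar n => if n < c then .tvar n else .tvar (n + 1)
  | .arr A B => .arr (liftF c A) (liftF c B)
  | .all A => .all (liftF (c + 1) A)

def substF : FTy → ℕ → FTy → FTy
  | .tvar n, k, B => if n = k then (liftF 0)^[k] B else if k < n then .tvar (n - 1) else .tvar n
  | .arr A C, k, B => .arr (substF A k B) (substF C k B)
  | .all A, k, B => .all (substF A (k + 1) B)

/-- Erasure of LAL formulas to system F types. -/
def eraseTy : Ty → FTy
  | .tvar n => .tvar n
  | .lolli A B => .arr (eraseTy A) (eraseTy B)
  | .bang A => eraseTy A
  | .para A => eraseTy A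
  | .all A => .all (eraseTy A)

/-- System F typing. -/
inductive FTj : List FTy → PTm → FTy → Prop where
  | var {Γ n A} : Γ[n]? = some A → FTj Γ (.var n) A
  | lam {Γ t A B} : FTj (A :: Γ) t B → FTj Γ (.lam t) (.arr A B)
  | app {Γ t u A B} : FTj Γ t (.arr A B) → FTj Γ u A → FTj Γ (.app t u) B
  | allI {Γ t A} : FTj (Γ.map (liftF 0)) t A → FTj Γ t (.all A)
  | allE {Γ t A} (B : FTy) : FTj Γ t (.all A) → FTj Γ t (substF A 0 B)

/-! ## Auxiliary lemmas for the erasure simulation -/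

def upS (σ : ℕ → PTm) : ℕ → PTm
  | 0 => .var 0
  | n + 1 => prename (· + 1) (σ n)

def psubst (σ : ℕ → PTm) : PTm → PTm
  | .var n => σ n
  | .lam t => .lam (psubst (upS σ) t)
  | .app t u => .app (psubst σ t) (psubst σ u)

lemma upRen_comp (f g : ℕ → ℕ) : (fun n => upRen f (upRen g n)) = upRen (fun n => f (g n)) := by
  funext n; cases n <;> simp [upRen]

lemma prename_prename (f g : ℕ → ℕ) (t : PTm) :
    prename f (prename g t) = prename (fun n => f (g n)) t := by
  induction t generalizing f g with
  | var n => rfl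
  | lam t ih => simp [prename, ih, upRen_comp]
  | app t u iht ihu => simp [prename, iht, ihu]

lemma prename_eq_psubst (f : ℕ → ℕ) (t : PTm) :
    prename f t = psubst (fun n => .var (f n)) t := by
  induction t generalizing f with
  | var n => rfl
  | lam t ih =>
    simp only [prename, psubst, ih]
    congr 1
    have : (fun n => PTm.var (upRen f n)) = upS (fun n => .var (f n)) := by
      funext n; cases n <;> simp [upRen, upS, prename]
    rw [this]
  | app t u iht ihu => simp [prename, psubst, iht, ihu]

lemma psubst_prename (σ : ℕ → PTm) (f : ℕ → ℕ) (t : PTm) :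
    psubst σ (prename f t) = psubst (fun n => σ (f n)) t := by
  induction t generalizing σ f with
  | var n => rfl
  | lam t ih =>
    simp only [prename, psubst, ih]
    have : (fun n => upS σ (upRen f n)) = upS (fun n => σ (f n)) := by
      funext n; cases n <;> simp [upRen, upS]
    rw [this]
  | app t u iht ihu => simp [prename, psubst, iht, ihu]

lemma prename_psubst (f : ℕ → ℕ) (σ : ℕ → PTm) (t : PTm) :
    prename f (psubst σ t) = psubst (fun n => prename f (σ n)) t := by
  induction t generalizing σ f with
  | var n => rfl
  | lam t ih =>
    simp only [prename, psubst, ih]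
    have : (fun n => prename (upRen f) (upS σ n)) = upS (fun n => prename f (σ n)) := by
      funext n; cases n with
      | zero => simp [upS, prename, upRen]
      | succ n => simp [upS, prename_prename, upRen]
    rw [this]
  | app t u iht ihu => simp [prename, psubst, iht, ihu]

lemma psubst_psubst (τ σ : ℕ → PTm) (t : PTm) :
    psubst τ (psubst σ t) = psubst (fun n => psubst τ (σ n)) t := by
  induction t generalizing σ τ with
  | var n => rfl
  | lam t ih =>
    simp only [psubst, ih]
    have : (fun n => psubst (upS τ) (upS σ n)) = upS (fun n => psubst τ (σ n)) := by
      funext n; cases n with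
      | zero => simp [upS, psubst]
      | succ n => simp [upS, psubst_prename, prename_psubst]
    rw [this]
  | app t u iht ihu => simp [psubst, iht, ihu]

lemma psubst_var (t : PTm) : psubst .var t = t := by
  induction t with
  | var n => rfl
  | lam t ih =>
    simp only [psubst]
    congr 1
    have : upS .var = .var := by funext n; cases n <;> simp [upS, prename]
    rw [this, ih]
  | app t u iht ihu => simp [psubst, iht, ihu]

def sig (k : ℕ) (u : PTm) : ℕ → PTm := fun n =>
  if n = k then prename (· + k) u else if k < n then .var (n - 1) else .var n

lemma prename_id (t : PTm) : prename (fun n => n) t = t := by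
  rw [prename_eq_psubst]
  exact psubst_var t

lemma prename_add_zero (t : PTm) : prename (· + 0) t = t :=
  prename_id t

lemma upS_sig (k : ℕ) (u : PTm) : upS (sig k u) = sig (k + 1) u := by
  funext n
  cases n with
  | zero => simp [upS, sig]
  | succ n =>
    simp only [upS, sig]
    by_cases h : n = k
    · subst h
      rw [if_pos rfl, if_pos rfl, prename_prename]
      rfl
    · by_cases h2 : k < n
      · rw [if_neg h, if_pos h2, if_neg (by omega), if_pos (by omega)]
        simp only [prename]
        congr 1
        omega
      · rw [if_neg h, if_neg h2, if_neg (by omega), if_neg (by omega)]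
        rfl

lemma psub_eq_psubst (t : PTm) (k : ℕ) (u : PTm) : psub t k u = psubst (sig k u) t := by
  induction t generalizing k with
  | var n => simp [psub, psubst, sig]
  | lam t ih => simp [psub, psubst, ih, upS_sig]
  | app t v iht ihv => simp [psub, psubst, iht, ihv]

lemma sig_self (k : ℕ) (u : PTm) : sig k u k = prename (· + k) u := by
  simp [sig]

lemma sig_lt {k n : ℕ} (h : n < k) (u : PTm) : sig k u n = .var n := by
  simp only [sig]
  rw [if_neg (by omega), if_neg (by omega)]

lemma sig_gt {k n : ℕ} (h : k < n) (u : PTm) : sig k u n = .var (n - 1) := by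
  simp only [sig]
  rw [if_neg (by omega), if_pos h]

lemma psubst_app_var (σ : ℕ → PTm) (n : ℕ) : psubst σ (.var n) = σ n := rfl

lemma psub0_prename (f : ℕ → ℕ) (a b : PTm) :
    prename f (psub a 0 b) = psub (prename (upRen f) a) 0 (prename f b) := by
  rw [psub_eq_psubst, psub_eq_psubst, prename_psubst, psubst_prename]
  have : (fun n => prename f (sig 0 b n)) = (fun n => sig 0 (prename f b) (upRen f n)) := by
    funext n
    cases n with
    | zero =>
      show prename f (prename (· + 0) b) = prename (· + 0) (prename f b)
      rw [prename_add_zero, prename_add_zero]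
    | succ n =>
      have e1 : sig 0 b (n + 1) = .var n := by
        rw [sig_gt (by omega) b]
        rfl
      have e2 : upRen f (n + 1) = f n + 1 := rfl
      rw [e1, e2, sig_gt (by omega) (prename f b), Nat.add_sub_cancel]
      rfl
  rw [this]

lemma erase_rename (f : ℕ → ℕ) (t : Tm) :
    eraseTm (rename f t) = prename f (eraseTm t) := by
  induction t generalizing f with
  | var n => rfl
  | lam t ih => simp [rename, eraseTm, prename, ih]
  | app t u iht ihu => simp [rename, eraseTm, prename, iht, ihu]
  | bang t ih => simp [rename, eraseTm, ih]
  | para t ih => simp [rename, eraseTm, ih]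
  | letBang u t ihu iht => simp [rename, eraseTm, iht, ihu, psub0_prename]
  | letPara u t ihu iht => simp [rename, eraseTm, iht, ihu, psub0_prename]

lemma cancel_shift (k : ℕ) (c X : PTm) :
    psub (prename (· + (k + 1)) c) 0 X = prename (· + k) c := by
  rw [psub_eq_psubst, prename_eq_psubst, psubst_psubst, prename_eq_psubst]
  have : (fun n => psubst (sig 0 X) (PTm.var (n + (k + 1)))) = (fun n => PTm.var (n + k)) := by
    funext n
    show sig 0 X (n + (k + 1)) = PTm.var (n + k)
    rw [sig_gt (by omega) X]
    rfl
  rw [this]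

lemma psub_psub (a b c : PTm) (k : ℕ) :
    psub (psub a 0 b) k c = psub (psub a (k + 1) c) 0 (psub b k c) := by
  simp only [psub_eq_psubst, psubst_psubst]
  have : (fun n => psubst (sig k c) (sig 0 b n))
      = (fun n => psubst (sig 0 (psubst (sig k c) b)) (sig (k + 1) c n)) := by
    funext n
    cases n with
    | zero =>
      rw [show sig 0 b 0 = prename (· + 0) b from sig_self 0 b,
        sig_lt (show (0 : ℕ) < k + 1 by omega) c, prename_add_zero, psubst_app_var,
        show sig 0 (psubst (sig k c) b) 0 = prename (· + 0) (psubst (sig k c) b) from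
          sig_self 0 _,
        prename_add_zero]
    | succ n =>
      rw [sig_gt (show (0 : ℕ) < n + 1 by omega) b, psubst_app_var, Nat.add_sub_cancel]
      rcases lt_trichotomy n k with h | h | h
      · rw [sig_lt h c, sig_lt (show n + 1 < k + 1 by omega) c, psubst_app_var,
          sig_gt (show (0 : ℕ) < n + 1 by omega)]
        rfl
      · subst h
        rw [show sig (n + 1) c (n + 1) = prename (· + (n + 1)) c from sig_self _ _,
          ← psub_eq_psubst, cancel_shift, sig_self]
      · rw [sig_gt (show k + 1 < n + 1 by omega) c, Nat.add_sub_cancel, psubst_app_var,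
          sig_gt h c, sig_gt (show 0 < n by omega)]
  rw [this]

lemma erase_sub (t : Tm) (k : ℕ) (u : Tm) :
    eraseTm (sub t k u) = psub (eraseTm t) k (eraseTm u) := by
  induction t generalizing k with
  | var n =>
    simp only [sub, eraseTm, psub]
    by_cases h : n = k
    · simp [h, erase_rename]
    · by_cases h2 : k < n <;> simp [h, h2, eraseTm]
  | lam t ih => simp [sub, eraseTm, psub, ih]
  | app t v iht ihv => simp [sub, eraseTm, psub, iht, ihv]
  | bang t ih => simp [sub, eraseTm, ih]
  | para t ih => simp [sub, eraseTm, ih]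
  | letBang v t ihv iht => simp [sub, eraseTm, iht, ihv, psub_psub]
  | letPara v t ihv iht => simp [sub, eraseTm, iht, ihv, psub_psub]

lemma cancel0 (s u : PTm) : psub (prename (· + 1) s) 0 u = s := by
  have h := cancel_shift 0 s u
  rw [h, prename_add_zero]

lemma cancel1 (s u : PTm) : psub (prename (upRen (· + 1)) s) 1 u = s := by
  rw [psub_eq_psubst, prename_eq_psubst, psubst_psubst]
  have : (fun n => psubst (sig 1 u) (PTm.var (upRen (· + 1) n))) = PTm.var := by
    funext n
    cases n with
    | zero => rfl
    | succ n =>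
      show sig 1 u (n + 2) = PTm.var (n + 1)
      rw [sig_gt (by omega) u]
      rfl
  rw [this, psubst_var]

lemma pstep_prename {t t' : PTm} (f : ℕ → ℕ) (h : PStep t t') :
    PStep (prename f t) (prename f t') := by
  induction h generalizing f with
  | @beta a b =>
    simp only [prename, psub0_prename]
    exact PStep.beta
  | congLam _ ih => exact PStep.congLam (ih _)
  | congApp₁ _ ih => exact PStep.congApp₁ (ih _)
  | congApp₂ _ ih => exact PStep.congApp₂ (ih _)

lemma pstep_psub_left {t t' : PTm} (k : ℕ) (u : PTm) (h : PStep t t') :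
    PStep (psub t k u) (psub t' k u) := by
  induction h generalizing k with
  | @beta a b =>
    simp only [psub]
    rw [psub_psub]
    exact PStep.beta
  | congLam _ ih => exact PStep.congLam (ih _)
  | congApp₁ _ ih => exact PStep.congApp₁ (ih _)
  | congApp₂ _ ih => exact PStep.congApp₂ (ih _)

lemma pred_lam {t t' : PTm} (h : PRed t t') : PRed (.lam t) (.lam t') :=
  Relation.ReflTransGen.lift PTm.lam (fun _ _ => PStep.congLam) _ _ h

lemma pred_app₁ {t t' u : PTm} (h : PRed t t') : PRed (.app t u) (.app t' u) :=
  Relation.ReflTransGen.lift (fun x => PTm.app x u) (fun _ _ => PStep.congApp₁) _ _ h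

lemma pred_app₂ {t u u' : PTm} (h : PRed u u') : PRed (.app t u) (.app t u') :=
  Relation.ReflTransGen.lift (fun x => PTm.app t x) (fun _ _ => PStep.congApp₂) _ _ h

lemma pred_psub_left {t t' : PTm} (k : ℕ) (u : PTm) (h : PRed t t') :
    PRed (psub t k u) (psub t' k u) :=
  Relation.ReflTransGen.lift (fun x => psub x k u) (fun _ _ h => pstep_psub_left k u h) _ _ h


lemma pstep_psub_right' {u u' : PTm} (t : PTm) (k : ℕ) (h : PStep u u') :
    PRed (psub t k u) (psub t k u') := by
  induction t generalizing k with
  | var n =>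
    simp only [psub]
    by_cases hn : n = k
    · simp only [if_pos hn]
      exact Relation.ReflTransGen.single (pstep_prename _ h)
    · by_cases h2 : k < n
      · simp only [if_neg hn, if_pos h2]
        exact Relation.ReflTransGen.refl
      · simp only [if_neg hn, if_neg h2]
        exact Relation.ReflTransGen.refl
  | lam t ih => exact pred_lam (ih (k + 1))
  | app t v iht ihv =>
    exact Relation.ReflTransGen.trans (pred_app₁ (iht k)) (pred_app₂ (ihv k))

lemma pred_psub_right {u u' : PTm} (t : PTm) (k : ℕ) (h : PRed u u') :
    PRed (psub t k u) (psub t k u') := by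
  induction h with
  | refl => exact Relation.ReflTransGen.refl
  | tail _ hs ih => exact Relation.ReflTransGen.trans ih (pstep_psub_right' t k hs)

end LAL

open LAL in
/-- If `t → t'` is a single reduction step in λ_LAL, then
`t⁻ →*_β t'⁻` (zero or more β-steps of the pure lambda-calculus). -/
theorem erasure_simulates_reduction (r : Rule) (t t' : Tm) (h : Step r t t') :
    PRed (eraseTm t) (eraseTm t') := by
  induction h with
  | beta =>
    rw [erase_sub]
    exact Relation.ReflTransGen.single PStep.beta
  | bang =>
    simp only [eraseTm, erase_sub]
    exact Relation.ReflTransGen.refl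
  | para =>
    simp only [eraseTm, erase_sub]
    exact Relation.ReflTransGen.refl
  | com1BB =>
    simp only [eraseTm, erase_rename, psub_psub, Nat.zero_add, cancel1]
    exact Relation.ReflTransGen.refl
  | com1BP =>
    simp only [eraseTm, erase_rename, psub_psub, Nat.zero_add, cancel1]
    exact Relation.ReflTransGen.refl
  | com1PB =>
    simp only [eraseTm, erase_rename, psub_psub, Nat.zero_add, cancel1]
    exact Relation.ReflTransGen.refl
  | com1PP =>
    simp only [eraseTm, erase_rename, psub_psub, Nat.zero_add, cancel1]
    exact Relation.ReflTransGen.refl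
  | com2B =>
    simp only [eraseTm, psub, erase_rename, cancel0]
    exact Relation.ReflTransGen.refl
  | com2P =>
    simp only [eraseTm, psub, erase_rename, cancel0]
    exact Relation.ReflTransGen.refl
  | congLam _ ih => exact pred_lam ih
  | congApp₁ _ ih => exact pred_app₁ ih
  | congApp₂ _ ih => exact pred_app₂ ih
  | congBang _ ih => exact ih
  | congPara _ ih => exact ih
  | congLetBang₁ _ ih => exact pred_psub_right _ 0 ih
  | congLetBang₂ _ ih => exact pred_psub_left 0 _ ih
  | congLetPara₁ _ ih => exact pred_psub_right _ 0 ih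
  | congLetPara₂ _ ih => exact pred_psub_left 0 _ ih
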